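/- Let E ⊆ ℂ^a ⊗ ℂ^b be a linear space of matrices, r < min(a,b), and suppose E is not of bounded rank r (i.e., some matrix in E has rank > r). If there exists a polynomial P of degree r+1 (in the coordinates of E) dividing all (r+1)×(r+1) minors of the generic matrix of E, then either P factors into a product of linear forms, or after changes of bases in ℂ^a and ℂ^b every matrix in E is supported in a common (r+1)×(r+1) block. -/

import Mathlib

open MvPolynomial Matrix

namespace Stmt1Aux


variable {c : ℕ}

lemma homogeneousComponent_monomial (n : ℕ) (d : Fin c →₀ ℕ) (a : ℂ) :
    MvPolynomial.homogeneousComponent n (monomial d a)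
      = if d.degree = n then monomial d a else 0 := by
  ext m
  rw [MvPolynomial.coeff_homogeneousComponent]
  rcases eq_or_ne d m with rfl | hdm
  · simp [MvPolynomial.coeff_monomial]
    split_ifs with h1 <;> simp [MvPolynomial.coeff_monomial]
  · rw [MvPolynomial.coeff_monomial, if_neg hdm]
    split_ifs with h1 h2 <;>
      simp [MvPolynomial.coeff_monomial, if_neg hdm]

/-- coefficient of the univariate specialization `xᵢ ↦ yᵢ • t`. -/
lemma coeff_aeval_line (y : Fin c → ℂ) (p : MvPolynomial (Fin c) ℂ) (n : ℕ) :
    (MvPolynomial.aeval (fun i => Polynomial.C (y i) * Polynomial.X : Fin c → Polynomial ℂ) p).coeff n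
      = MvPolynomial.eval y (MvPolynomial.homogeneousComponent n p) := by
  induction p using MvPolynomial.induction_on' with
  | monomial d a =>
      have hmono : (MvPolynomial.aeval (fun i => Polynomial.C (y i) * Polynomial.X : Fin c → Polynomial ℂ))
          (monomial d a) = Polynomial.C (a * ∏ i ∈ d.support, y i ^ d i) * Polynomial.X ^ (d.degree) := by
        rw [MvPolynomial.aeval_monomial]
        have : (d.prod fun i k => (Polynomial.C (y i) * Polynomial.X) ^ k)
            = Polynomial.C (∏ i ∈ d.support, y i ^ d i) * Polynomial.X ^ d.degree := by
          rw [Finsupp.prod, Finsupp.degree]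
          simp_rw [mul_pow, ← Polynomial.C_pow]
          rw [Finset.prod_mul_distrib, ← map_prod, Finset.prod_pow_eq_pow_sum]
          rfl
        rw [this, ← mul_assoc]
        simp [Polynomial.C_mul, Algebra.algebraMap_self_apply]
      rw [hmono, homogeneousComponent_monomial]
      rcases eq_or_ne d.degree n with hdn | hdn
      · rw [if_pos hdn, Polynomial.coeff_C_mul, hdn, Polynomial.coeff_X_pow, if_pos rfl,
          MvPolynomial.eval_monomial]
        rw [Finsupp.prod]
        ring
      · rw [if_neg hdn, Polynomial.coeff_C_mul, Polynomial.coeff_X_pow,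
          if_neg (Ne.symm hdn)]
        simp
  | add p q hp hq =>
      simp [map_add, hp, hq]

lemma topComponent_ne_zero {p : MvPolynomial (Fin c) ℂ} (hp : p ≠ 0) :
    MvPolynomial.homogeneousComponent p.totalDegree p ≠ 0 := by
  obtain ⟨d, hd, hdeg⟩ : ∃ d ∈ p.support, p.totalDegree = d.sum fun _ e => e := by
    obtain ⟨d, hd, h⟩ := Finset.exists_mem_eq_sup p.support
      (MvPolynomial.support_nonempty.2 hp) (fun m => m.sum fun _ e => e)
    exact ⟨d, hd, h⟩
  intro h0
  have := MvPolynomial.coeff_homogeneousComponent (R := ℂ) p.totalDegree p d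
  rw [h0] at this
  simp only [MvPolynomial.coeff_zero] at this
  have hdd : d.degree = p.totalDegree := by
    rw [hdeg, Finsupp.degree]; rfl
  rw [if_pos hdd] at this
  exact (MvPolynomial.mem_support_iff.1 hd) this.symm

lemma totalDegree_mul_eq {p q : MvPolynomial (Fin c) ℂ} (hp : p ≠ 0) (hq : q ≠ 0) :
    (p * q).totalDegree = p.totalDegree + q.totalDegree := by
  refine le_antisymm (MvPolynomial.totalDegree_mul p q) ?_
  obtain ⟨y, hy⟩ : ∃ y : Fin c → ℂ, MvPolynomial.eval y
      (homogeneousComponent p.totalDegree p * homogeneousComponent q.totalDegree q) ≠ 0 := by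
    by_contra h
    push_neg at h
    have := MvPolynomial.funext (R := ℂ) (σ := Fin c)
      (p := homogeneousComponent p.totalDegree p * homogeneousComponent q.totalDegree q)
      (q := 0) (fun x => by rw [map_zero]; exact h x)
    exact mul_ne_zero (topComponent_ne_zero hp) (topComponent_ne_zero hq) this
  rw [_root_.map_mul] at hy
  set φ := (MvPolynomial.aeval (R := ℂ) (fun i => Polynomial.C (y i) * Polynomial.X : Fin c → Polynomial ℂ))
  have hφp : (φ p).coeff p.totalDegree ≠ 0 := by
    rw [coeff_aeval_line]; exact fun h => hy (by simp [h])
  have hφq : (φ q).coeff q.totalDegree ≠ 0 := by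
    rw [coeff_aeval_line]; exact fun h => hy (by simp [h])
  have h1 : p.totalDegree ≤ (φ p).natDegree := Polynomial.le_natDegree_of_ne_zero hφp
  have h2 : q.totalDegree ≤ (φ q).natDegree := Polynomial.le_natDegree_of_ne_zero hφq
  have hφp0 : φ p ≠ 0 := fun h => hφp (by simp [h])
  have hφq0 : φ q ≠ 0 := fun h => hφq (by simp [h])
  have hmul : (φ (p * q)).natDegree = (φ p).natDegree + (φ q).natDegree := by
    rw [_root_.map_mul]; exact Polynomial.natDegree_mul hφp0 hφq0
  have h3 : (φ (p * q)).natDegree ≤ (p * q).totalDegree := by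
    rw [Polynomial.natDegree_le_iff_coeff_eq_zero]
    intro m hm
    rw [coeff_aeval_line, MvPolynomial.homogeneousComponent_eq_zero _ _ hm, map_zero]
  omega

lemma eq_C_mul_of_dvd {P M : MvPolynomial (Fin c) ℂ} {n : ℕ} (hP : P ≠ 0)
    (hdeg : P.totalDegree = n) (hM : M.IsHomogeneous n) (hdvd : P ∣ M) :
    ∃ μ : ℂ, M = MvPolynomial.C μ * P := by
  obtain ⟨Q, rfl⟩ := hdvd
  rcases eq_or_ne Q 0 with rfl | hQ
  · exact ⟨0, by simp⟩
  have hPQ : P * Q ≠ 0 := mul_ne_zero hP hQ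
  have htd : (P * Q).totalDegree = n := hM.totalDegree hPQ
  have hq0 : Q.totalDegree = 0 := by
    have := totalDegree_mul_eq hP hQ
    omega
  have hQC : Q = MvPolynomial.C (Q.coeff 0) := by
    ext d
    rw [MvPolynomial.coeff_C]
    rcases eq_or_ne (0 : Fin c →₀ ℕ) d with rfl | hd
    · rw [if_pos rfl]
    · rw [if_neg hd]
      by_contra hne
      have hmem : d ∈ Q.support := MvPolynomial.mem_support_iff.2 hne
      have := (MvPolynomial.totalDegree_eq_zero_iff (p := Q)).1 hq0 d hmem
      refine hd ?_
      ext x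
      simp [this x]
  refine ⟨Q.coeff 0, ?_⟩
  rw [mul_comm, ← hQC]



variable {c : ℕ}

lemma det_isHomogeneous {n : ℕ} (M : Matrix (Fin n) (Fin n) (MvPolynomial (Fin c) ℂ))
    (h : ∀ i j, (M i j).IsHomogeneous 1) : M.det.IsHomogeneous n := by
  rw [Matrix.det_apply]
  have : ∀ σ : Equiv.Perm (Fin n),
      (Equiv.Perm.sign σ • ∏ i, M (σ i) i).IsHomogeneous n := by
    intro σ
    have hprod : (∏ i, M (σ i) i).IsHomogeneous n := by
      have := MvPolynomial.IsHomogeneous.prod (Finset.univ) (fun i => M (σ i) i)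
        (fun _ => 1) (fun i _ => h (σ i) i)
      simpa using this
    rcases Int.units_eq_one_or (Equiv.Perm.sign σ) with hs | hs <;> rw [hs]
    · simpa using hprod
    · have : ((-1 : ℤˣ) • ∏ i, M (σ i) i) = -(∏ i, M (σ i) i) := by
        simp [Units.smul_def]
      rw [this]
      exact hprod.neg
  exact MvPolynomial.IsHomogeneous.sum Finset.univ _ n (fun σ _ => this σ)

/-- From a family spanning a space of finrank ≥ N, extract N indices with
linearly independent vectors. -/
lemma exists_inj_linearIndependent {ι : Type*} [Fintype ι] {N : ℕ}
    (v : ι → (Fin N → ℂ) → ℂ) : True := trivial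

lemma exists_inj_li {V : Type*} [AddCommGroup V] [Module ℂ V] {ι : Type*} [Finite ι]
    {N : ℕ} (v : ι → V)
    (h : N ≤ Module.finrank ℂ (Submodule.span ℂ (Set.range v))) :
    ∃ f : Fin N → ι, Function.Injective f ∧ LinearIndependent ℂ (v ∘ f) := by
  obtain ⟨t, hsub, hspan, hind⟩ := exists_linearIndependent ℂ (Set.range v)
  have htfin : t.Finite := Set.Finite.subset (Set.finite_range v) hsub
  haveI : Fintype t := htfin.fintype
  have hcard : N ≤ t.toFinset.card := by
    rw [← finrank_span_set_eq_card hind, hspan]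
    exact h
  have : Nonempty (Fin N ↪ t) := by
    rw [Function.Embedding.nonempty_iff_card_le]
    simpa [Set.toFinset_card] using hcard
  obtain ⟨e⟩ := this
  have hchoice : ∀ s : Fin N, ∃ i : ι, v i = (e s : V) := by
    intro s
    obtain ⟨i, hi⟩ := hsub (e s).2
    exact ⟨i, hi⟩
  choose f hf using hchoice
  have hvf : v ∘ f = fun s => ((e s : V)) := funext fun s => hf s
  have hli : LinearIndependent ℂ (v ∘ f) := by
    rw [hvf]
    exact hind.comp e e.injective
  refine ⟨f, ?_, hli⟩
  intro s₁ s₂ hss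
  have : (e s₁ : V) = (e s₂ : V) := by rw [← hf s₁, ← hf s₂, hss]
  exact e.injective (Subtype.ext this)

lemma exists_nonzero_minor {a b N : ℕ} (M : Matrix (Fin a) (Fin b) ℂ)
    (h : N ≤ M.rank) :
    ∃ (f : Fin N → Fin a) (g : Fin N → Fin b), Function.Injective f ∧
      Function.Injective g ∧ (M.submatrix f g).det ≠ 0 := by
  -- extract independent columns
  have hcols : N ≤ Module.finrank ℂ (Submodule.span ℂ (Set.range Mᵀ)) := by
    rw [Matrix.rank_eq_finrank_span_cols] at h; exact h
  obtain ⟨g, hg, hgli⟩ := exists_inj_li Mᵀ hcols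
  -- M₁ = selected columns
  set M₁ : Matrix (Fin a) (Fin N) ℂ := M.submatrix id g with hM₁
  have hM₁T : M₁ᵀ = fun s => Mᵀ (g s) := by
    ext s i; rfl
  have hM₁rank : M₁.rank = N := by
    have : M₁ᵀ.rank = N := by
      have : LinearIndependent ℂ M₁ᵀ := by rw [hM₁T]; exact hgli
      rw [LinearIndependent.rank_matrix (M := M₁ᵀ) this]; simp
    rw [← Matrix.rank_transpose]; exact this
  have hrows : N ≤ Module.finrank ℂ (Submodule.span ℂ (Set.range M₁)) := by
    rw [Matrix.rank_eq_finrank_span_row] at hM₁rank; exact hM₁rank.ge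
  obtain ⟨f, hf, hfli⟩ := exists_inj_li M₁ hrows
  refine ⟨f, g, hf, hg, ?_⟩
  intro hdet
  obtain ⟨v, hv0, hv⟩ := Matrix.exists_vecMul_eq_zero_iff.2 hdet
  have : ∀ j, (∑ i, v i • (M₁ ∘ f) i) j = 0 := by
    intro j
    have := congrFun hv j
    rw [Matrix.vecMul] at this
    rw [Finset.sum_apply]
    show ∑ x, v x * M (f x) (g j) = 0
    simpa [hM₁, Matrix.submatrix_apply, dotProduct, Finset.sum_apply, mul_comm] using this
  have hzero : (∑ i, v i • (M₁ ∘ f) i) = 0 := funext this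
  have := linearIndependent_iff'.1 hfli Finset.univ v (by simpa using hzero)
  exact hv0 (funext fun i => this i (Finset.mem_univ i))

/-- extend a subspace to one of prescribed finrank. -/
lemma exists_superspace {m N : ℕ} (W : Submodule ℂ (Fin m → ℂ))
    (hW : Module.finrank ℂ W ≤ N) (hN : N ≤ m) :
    ∃ W' : Submodule ℂ (Fin m → ℂ), W ≤ W' ∧ Module.finrank ℂ W' = N := by
  obtain ⟨k, hk⟩ : ∃ k, N - Module.finrank ℂ W = k := ⟨_, rfl⟩
  induction k generalizing W with
  | zero =>
      refine ⟨W, le_rfl, ?_⟩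
      omega
  | succ k ih =>
      have hlt : Module.finrank ℂ W < N := by omega
      have hne : W ≠ ⊤ := by
        intro hW'
        rw [hW', finrank_top] at hlt
        simp [Module.finrank_fintype_fun_eq_card] at hlt
        omega
      obtain ⟨v, hv⟩ : ∃ v, v ∉ W := by
        by_contra hall
        push_neg at hall
        exact hne (Submodule.eq_top_iff'.2 hall)
      have hv0 : v ≠ 0 := fun h0 => hv (h0 ▸ W.zero_mem)
      have hinf : W ⊓ Submodule.span ℂ {v} = ⊥ := by
        rw [eq_bot_iff]
        intro w hw
        obtain ⟨hw1, hw2⟩ := Submodule.mem_inf.1 hw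
        obtain ⟨μ, rfl⟩ := Submodule.mem_span_singleton.1 hw2
        rcases eq_or_ne μ 0 with rfl | hμ
        · simp
        · exact absurd ((W.smul_mem_iff hμ).1 hw1) hv
      have hsup : Module.finrank ℂ ↥(W ⊔ Submodule.span ℂ {v}) = Module.finrank ℂ W + 1 := by
        have := Submodule.finrank_sup_add_finrank_inf_eq W (Submodule.span ℂ {v})
        rw [hinf, finrank_span_singleton hv0] at this
        simpa using this
      have hle : Module.finrank ℂ ↥(W ⊔ Submodule.span ℂ {v}) ≤ N := by omega
      obtain ⟨W', hW'le, hW'⟩ := ih (W ⊔ Submodule.span ℂ {v}) hle (by omega)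
      exact ⟨W', le_trans le_sup_left hW'le, hW'⟩



variable {c : ℕ}

lemma update_injective {α β : Type*} [DecidableEq α] {f : α → β}
    (hf : Function.Injective f) (t : α) {v : β} (hv : ∀ s, f s ≠ v) :
    Function.Injective (Function.update f t v) := by
  intro s₁ s₂ h
  by_cases h₁ : s₁ = t <;> by_cases h₂ : s₂ = t
  · rw [h₁, h₂]
  · rw [h₁, Function.update_self, Function.update_of_ne h₂] at h
    exact absurd h.symm (hv s₂)
  · rw [h₂, Function.update_self, Function.update_of_ne h₁] at h
    exact absurd h (hv s₁)
  · rw [Function.update_of_ne h₁, Function.update_of_ne h₂] at h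
    exact hf h

lemma sum_elim_injective {α β : Type*} {f : α → β} (hf : Function.Injective f)
    {v : β} (hv : ∀ s, f s ≠ v) :
    Function.Injective (Sum.elim f (fun _ : Fin 1 => v)) := by
  intro s₁ s₂ h
  rcases s₁ with s₁ | s₁ <;> rcases s₂ with s₂ | s₂ <;> simp at h ⊢
  · exact hf h
  · exact absurd h (hv s₁)
  · exact absurd h.symm (hv s₂)
  · exact Subsingleton.elim _ _

lemma rows_comb {a b N : ℕ} (E : Matrix (Fin a) (Fin b) (MvPolynomial (Fin c) ℂ))
    (P : MvPolynomial (Fin c) ℂ) (hP : P ≠ 0)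
    (f₀ : Fin N → Fin a) (g₀ : Fin N → Fin b)
    (hf₀ : Function.Injective f₀) (hg₀ : Function.Injective g₀)
    (lam : ℂ) (hlam : lam ≠ 0)
    (hM₀ : (E.submatrix f₀ g₀).det = MvPolynomial.C lam * P)
    (hminor : ∀ (f : Fin N → Fin a), Function.Injective f →
        ∃ μ : ℂ, (E.submatrix f g₀).det = MvPolynomial.C μ * P)
    (hbig : ∀ (f : Fin N ⊕ Fin 1 → Fin a) (g : Fin N ⊕ Fin 1 → Fin b),
        Function.Injective f → Function.Injective g → (E.submatrix f g).det = 0) :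
    ∃ U : Matrix (Fin a) (Fin N) ℂ, ∀ i j, E i j = ∑ t, MvPolynomial.C (U i t) * E (f₀ t) j := by
  classical
  set M₀ : Matrix (Fin N) (Fin N) (MvPolynomial (Fin c) ℂ) := E.submatrix f₀ g₀ with hM₀def
  set d : MvPolynomial (Fin c) ℂ := M₀.det with hd
  have hd0 : d ≠ 0 := by
    rw [hM₀]
    exact mul_ne_zero (fun h => hlam (by simpa using (MvPolynomial.C_eq_zero.mp h))) hP
  set z : Fin a → Fin N → (MvPolynomial (Fin c) ℂ) := fun i k => E i (g₀ k) with hz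
  set u : Fin a → Fin N → (MvPolynomial (Fin c) ℂ) :=
    fun i => Matrix.vecMul (z i) (Matrix.adjugate M₀) with hu
  -- Step A : each u i t is a constant multiple of P
  have stepA : ∀ i t, ∃ μ : ℂ, u i t = MvPolynomial.C μ * P := by
    intro i t
    have hcram : u i t = (M₀.updateRow t (z i)).det := by
      have h1 : u i = Matrix.mulVec (Matrix.adjugate M₀ᵀ) (z i) := by
        rw [hu, ← Matrix.adjugate_transpose]
        exact (Matrix.mulVec_transpose (Matrix.adjugate M₀) (z i)).symm
      rw [h1, ← Matrix.cramer_eq_adjugate_mulVec, Matrix.cramer_apply,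
        Matrix.updateCol_transpose, Matrix.det_transpose]
    have hupd : M₀.updateRow t (z i) = E.submatrix (Function.update f₀ t i) g₀ := by
      ext s k
      rcases eq_or_ne s t with rfl | hst
      · rw [Matrix.updateRow_self]
        simp [hz, Matrix.submatrix_apply]
      · rw [Matrix.updateRow_ne hst]
        simp [hM₀def, Matrix.submatrix_apply, Function.update_of_ne hst]
    by_cases hi : ∃ s, f₀ s = i
    · obtain ⟨s, rfl⟩ := hi
      rcases eq_or_ne s t with rfl | hst
      · refine ⟨lam, ?_⟩
        rw [hcram, hupd, Function.update_eq_self]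
        exact hM₀
      · refine ⟨0, ?_⟩
        rw [hcram, hupd]
        rw [Matrix.det_zero_of_row_eq hst.symm]
        · simp
        · funext k
          simp [Matrix.submatrix_apply, Function.update_self, Function.update_of_ne hst]
    · push_neg at hi
      have hinj : Function.Injective (Function.update f₀ t i) :=
        update_injective hf₀ t hi
      obtain ⟨μ, hμ⟩ := hminor _ hinj
      exact ⟨μ, by rw [hcram, hupd]; exact hμ⟩
  -- Step B : the key linear relation
  have stepB : ∀ i j, d * E i j = ∑ t, u i t * E (f₀ t) j := by
    intro i j
    set Zm : Matrix (Fin 1) (Fin N) (MvPolynomial (Fin c) ℂ) := fun _ k => E i (g₀ k) with hZm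
    set Ym : Matrix (Fin N) (Fin 1) (MvPolynomial (Fin c) ℂ) := fun t _ => E (f₀ t) j with hYm
    set Wm : Matrix (Fin 1) (Fin 1) (MvPolynomial (Fin c) ℂ) := fun _ _ => E i j with hWm
    set B : Matrix (Fin N ⊕ Fin 1) (Fin N ⊕ Fin 1) (MvPolynomial (Fin c) ℂ) :=
      Matrix.fromBlocks M₀ Ym Zm Wm with hB
    have hdetB : B.det = 0 := by
      have hsub : B = E.submatrix (Sum.elim f₀ fun _ => i) (Sum.elim g₀ fun _ => j) := by
        ext s k
        rcases s with s | s <;> rcases k with k | k <;> rfl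
      by_cases hi : ∃ s, f₀ s = i
      · obtain ⟨s, rfl⟩ := hi
        refine Matrix.det_zero_of_row_eq (i := Sum.inl s) (j := Sum.inr 0) (by simp) ?_
        rw [hsub]
        funext k
        rcases k with k | k <;> rfl
      · by_cases hj : ∃ k, g₀ k = j
        · obtain ⟨k, rfl⟩ := hj
          refine Matrix.det_zero_of_column_eq (i := Sum.inl k) (j := Sum.inr 0) (by simp) ?_
          intro s
          rw [hsub]
          rcases s with s | s <;> rfl
        · push_neg at hi hj
          rw [hsub]
          exact hbig _ _ (sum_elim_injective hf₀ hi) (sum_elim_injective hg₀ hj)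
    -- now the determinant computation
    set F1 : Matrix (Fin N ⊕ Fin 1) (Fin N ⊕ Fin 1) (MvPolynomial (Fin c) ℂ) :=
      Matrix.fromBlocks (Matrix.adjugate M₀) 0 0 1 with hF1def
    set F2 : Matrix (Fin N ⊕ Fin 1) (Fin N ⊕ Fin 1) (MvPolynomial (Fin c) ℂ) :=
      Matrix.fromBlocks 1 0 (-(Zm * Matrix.adjugate M₀)) (d • 1) with hF2def
    have step1 : B * F1 = Matrix.fromBlocks (d • 1) Ym (Zm * Matrix.adjugate M₀) Wm := by
      rw [hB, hF1def, Matrix.fromBlocks_multiply]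
      congr 1 <;> simp [Matrix.mul_adjugate, ← hd]
    have step2 : F2 * (B * F1) =
        Matrix.fromBlocks (d • 1) Ym 0 (d • Wm - (Zm * Matrix.adjugate M₀) * Ym) := by
      rw [step1, hF2def, Matrix.fromBlocks_multiply]
      congr 1 <;>
        simp [Matrix.mul_smul, Matrix.smul_mul, sub_eq_neg_add, add_comm]
    have hF1det : F1.det = d ^ (N - 1) := by
      rw [hF1def, Matrix.det_fromBlocks_zero₂₁, Matrix.det_adjugate, Matrix.det_one]
      simp [← hd]
    have hF2det : F2.det = d := by
      rw [hF2def, Matrix.det_fromBlocks_zero₁₂, Matrix.det_one]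
      rw [Matrix.det_fin_one]
      simp
    have hRHSdet : (Matrix.fromBlocks (d • (1 : Matrix (Fin N) (Fin N) (MvPolynomial (Fin c) ℂ)))
        Ym 0 (d • Wm - (Zm * Matrix.adjugate M₀) * Ym)).det
        = d ^ N * ((d • Wm - (Zm * Matrix.adjugate M₀) * Ym) 0 0) := by
      rw [Matrix.det_fromBlocks_zero₂₁, Matrix.det_fin_one]
      congr 1
      rw [Matrix.det_smul, Matrix.det_one]
      simp
    have hchain : d ^ N * ((d • Wm - (Zm * Matrix.adjugate M₀) * Ym) 0 0) = 0 := by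
      rw [← hRHSdet, ← step2, Matrix.det_mul, Matrix.det_mul, hdetB, hF2det]
      ring
    have hentry : (d • Wm - (Zm * Matrix.adjugate M₀) * Ym) 0 0 = 0 :=
      by
        have := mul_eq_zero.mp hchain
        rcases this with h | h
        · exact absurd h (pow_ne_zero _ hd0)
        · exact h
    have hexpand : (d • Wm - (Zm * Matrix.adjugate M₀) * Ym) 0 0
        = d * E i j - ∑ t, u i t * E (f₀ t) j := by
      simp only [Matrix.sub_apply, Matrix.smul_apply, Matrix.mul_apply, Matrix.vecMul,
        dotProduct, hu, smul_eq_mul]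
      rfl
    rw [hexpand] at hentry
    exact sub_eq_zero.mp hentry
  -- Step C : assemble
  choose μ hμ using stepA
  refine ⟨fun i t => lam⁻¹ * μ i t, ?_⟩
  intro i j
  have key := stepB i j
  have key2 : P * (MvPolynomial.C lam * E i j)
      = P * ∑ t, MvPolynomial.C (μ i t) * E (f₀ t) j := by
    calc P * (MvPolynomial.C lam * E i j) = (MvPolynomial.C lam * P) * E i j := by ring
      _ = d * E i j := by rw [← hM₀]
      _ = ∑ t, u i t * E (f₀ t) j := key
      _ = ∑ t, (MvPolynomial.C (μ i t) * P) * E (f₀ t) j := by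
          exact Finset.sum_congr rfl fun t _ => by rw [hμ]
      _ = P * ∑ t, MvPolynomial.C (μ i t) * E (f₀ t) j := by
          rw [Finset.mul_sum]
          exact Finset.sum_congr rfl fun t _ => by ring
  have key3 := mul_left_cancel₀ hP key2
  calc E i j = (MvPolynomial.C lam⁻¹ * MvPolynomial.C lam) * E i j := by
        rw [← MvPolynomial.C_mul, inv_mul_cancel₀ hlam, MvPolynomial.C_1, one_mul]
    _ = MvPolynomial.C lam⁻¹ * (MvPolynomial.C lam * E i j) := by rw [mul_assoc]
    _ = MvPolynomial.C lam⁻¹ * ∑ t, MvPolynomial.C (μ i t) * E (f₀ t) j := by rw [key3]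
    _ = ∑ t, MvPolynomial.C (lam⁻¹ * μ i t) * E (f₀ t) j := by
        rw [Finset.mul_sum]
        exact Finset.sum_congr rfl fun t _ => by rw [MvPolynomial.C_mul, mul_assoc]


end Stmt1Aux

open Stmt1Aux

/-- Lemma 3.1 of the paper: if a degree-`r+1` polynomial `P` divides all
`(r+1)×(r+1)` minors of a space of matrices `E` (given as a matrix of linear forms)
which is not of bounded rank `r`, then either `P` is a product of linear forms, or
(after changes of bases) `E` is supported in a common `(r+1)×(r+1)` block. -/
theorem stmt1 (a b c r : ℕ) (hr : r < min a b)
    (E : Matrix (Fin a) (Fin b) (MvPolynomial (Fin c) ℂ))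
    (hlin : ∀ i j, (E i j).IsHomogeneous 1)
    (hnb : ∃ x : Fin c → ℂ, r < (E.map (MvPolynomial.eval x)).rank)
    (P : MvPolynomial (Fin c) ℂ) (hdeg : P.totalDegree = r + 1)
    (hdvd : ∀ (f : Fin (r + 1) → Fin a) (g : Fin (r + 1) → Fin b),
      Function.Injective f → Function.Injective g → P ∣ (E.submatrix f g).det) :
    (∃ L : Fin (r + 1) → MvPolynomial (Fin c) ℂ,
      (∀ i, (L i).IsHomogeneous 1) ∧ P = ∏ i, L i) ∨
    (∃ (A' : Submodule ℂ (Fin a → ℂ)) (B' : Submodule ℂ (Fin b → ℂ)),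
      Module.finrank ℂ A' = r + 1 ∧ Module.finrank ℂ B' = r + 1 ∧
      ∀ x : Fin c → ℂ,
        (∀ j, (fun i => MvPolynomial.eval x (E i j)) ∈ A') ∧
        (∀ i, (fun j => MvPolynomial.eval x (E i j)) ∈ B')) := by
  classical
  set N := r + 1 with hN
  have hNa : N ≤ a := by omega
  have hNb : N ≤ b := by omega
  -- find a nonvanishing N×N minor
  obtain ⟨x₀, hx₀⟩ := hnb
  obtain ⟨f₀, g₀, hf₀, hg₀, hdet0⟩ :=
    exists_nonzero_minor (E.map (MvPolynomial.eval x₀)) (by omega : N ≤ _)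
  have hpoly : (E.submatrix f₀ g₀).det ≠ 0 := by
    intro h
    apply hdet0
    rw [Matrix.submatrix_map, ← RingHom.mapMatrix_apply, ← RingHom.map_det, h, map_zero]
  have hPne : P ≠ 0 := by
    intro h
    exact hpoly (zero_dvd_iff.mp (h ▸ hdvd f₀ g₀ hf₀ hg₀))
  have hhom : ∀ (f : Fin N → Fin a) (g : Fin N → Fin b),
      ((E.submatrix f g).det).IsHomogeneous N :=
    fun f g => det_isHomogeneous _ (fun i j => hlin _ _)
  have hminors : ∀ (f : Fin N → Fin a) (g : Fin N → Fin b),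
      Function.Injective f → Function.Injective g →
      ∃ μ : ℂ, (E.submatrix f g).det = MvPolynomial.C μ * P :=
    fun f g hf hg => eq_C_mul_of_dvd hPne hdeg (hhom f g) (hdvd f g hf hg)
  obtain ⟨lam, hlam_eq⟩ := hminors f₀ g₀ hf₀ hg₀
  have hlam : lam ≠ 0 := by
    intro h
    apply hpoly
    rw [hlam_eq, h, map_zero, zero_mul]
  by_cases hbig : ∀ (f : Fin (N + 1) → Fin a) (g : Fin (N + 1) → Fin b),
      Function.Injective f → Function.Injective g → (E.submatrix f g).det = 0
  · -- Case 2: compression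
    right
    have hbig' : ∀ (f : Fin N ⊕ Fin 1 → Fin a) (g : Fin N ⊕ Fin 1 → Fin b),
        Function.Injective f → Function.Injective g → (E.submatrix f g).det = 0 := by
      intro f g hf hg
      have e := finSumFinEquiv (m := N) (n := 1)
      have h1 := hbig (f ∘ e.symm) (g ∘ e.symm)
        (hf.comp e.symm.injective) (hg.comp e.symm.injective)
      have h2 : E.submatrix f g = (E.submatrix (f ∘ e.symm) (g ∘ e.symm)).submatrix e e := by
        ext s k
        simp [Matrix.submatrix_apply]
      rw [h2, Matrix.det_submatrix_equiv_self, h1]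
    obtain ⟨U, hU⟩ := rows_comb E P hPne f₀ g₀ hf₀ hg₀ lam hlam hlam_eq
      (fun f hf => hminors f g₀ hf hg₀) hbig'
    have hbigT : ∀ (f : Fin N ⊕ Fin 1 → Fin b) (g : Fin N ⊕ Fin 1 → Fin a),
        Function.Injective f → Function.Injective g → (Eᵀ.submatrix f g).det = 0 := by
      intro f g hf hg
      have : Eᵀ.submatrix f g = (E.submatrix g f)ᵀ := by ext s k; rfl
      rw [this, Matrix.det_transpose]
      exact hbig' g f hg hf
    have hlam_eqT : (Eᵀ.submatrix g₀ f₀).det = MvPolynomial.C lam * P := by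
      have : Eᵀ.submatrix g₀ f₀ = (E.submatrix f₀ g₀)ᵀ := by ext s k; rfl
      rw [this, Matrix.det_transpose]
      exact hlam_eq
    obtain ⟨V, hV⟩ := rows_comb Eᵀ P hPne g₀ f₀ hg₀ hf₀ lam hlam hlam_eqT
      (fun g hg => by
        have : Eᵀ.submatrix g f₀ = (E.submatrix f₀ g)ᵀ := by ext s k; rfl
        rw [this, Matrix.det_transpose]
        exact hminors f₀ g hf₀ hg) hbigT
    -- build the subspaces
    set wcol : Fin N → (Fin a → ℂ) := fun t i => U i t with hwcol
    set wrow : Fin N → (Fin b → ℂ) := fun t j => V j t with hwrow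
    obtain ⟨A', hA'le, hA'rank⟩ := exists_superspace
      (Submodule.span ℂ (Set.range wcol))
      (by simpa [Set.finrank] using finrank_range_le_card wcol) (by omega)
    obtain ⟨B', hB'le, hB'rank⟩ := exists_superspace
      (Submodule.span ℂ (Set.range wrow))
      (by simpa [Set.finrank] using finrank_range_le_card wrow) (by omega)
    refine ⟨A', B', hA'rank, hB'rank, ?_⟩
    intro x
    constructor
    · intro j
      have hcol : (fun i => MvPolynomial.eval x (E i j))
          = ∑ t, (MvPolynomial.eval x (E (f₀ t) j)) • wcol t := by
        funext i
        rw [Finset.sum_apply]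
        have := congrArg (MvPolynomial.eval x) (hU i j)
        rw [map_sum] at this
        rw [this]
        exact Finset.sum_congr rfl fun t _ => by
          simp [hwcol, smul_eq_mul]
          ring
      rw [hcol]
      exact Submodule.sum_mem _ fun t _ => Submodule.smul_mem _ _
        (hA'le (Submodule.subset_span (Set.mem_range_self t)))
    · intro i
      have hrow : (fun j => MvPolynomial.eval x (E i j))
          = ∑ t, (MvPolynomial.eval x (E i (g₀ t))) • wrow t := by
        funext j
        rw [Finset.sum_apply]
        have := congrArg (MvPolynomial.eval x) (hV j i)
        rw [map_sum] at this
        rw [Matrix.transpose_apply] at this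
        rw [this]
        exact Finset.sum_congr rfl fun t _ => by
          simp [hwrow, smul_eq_mul, Matrix.transpose_apply]
          ring
      rw [hrow]
      exact Submodule.sum_mem _ fun t _ => Submodule.smul_mem _ _
        (hB'le (Submodule.subset_span (Set.mem_range_self t)))
  · -- Case 1: product of linear forms
    left
    push_neg at hbig
    obtain ⟨f, g, hf, hg, hD⟩ := hbig
    set B : Matrix (Fin (N + 1)) (Fin (N + 1)) (MvPolynomial (Fin c) ℂ) :=
      E.submatrix f g with hBdef
    have hadj : ∀ k l, ∃ ν : ℂ, Matrix.adjugate B k l = MvPolynomial.C ν * P := by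
      intro k l
      obtain ⟨μ, hμ⟩ := hminors (f ∘ l.succAbove) (g ∘ k.succAbove)
        (hf.comp (Fin.succAbove_right_injective))
        (hg.comp (Fin.succAbove_right_injective))
      refine ⟨(-1 : ℂ) ^ (l + k : ℕ) * μ, ?_⟩
      rw [Matrix.adjugate_apply, Matrix.det_succ_row _ l]
      have hterm : ∀ j : Fin (N + 1), j ≠ k →
          (-1 : MvPolynomial (Fin c) ℂ) ^ (l + j : ℕ)
            * (B.updateRow l (Pi.single k 1)) l j
            * ((B.updateRow l (Pi.single k 1)).submatrix l.succAbove j.succAbove).det = 0 := by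
        intro j hj
        rw [Matrix.updateRow_self, Pi.single_apply, if_neg hj]
        ring
      rw [Finset.sum_eq_single k (fun j _ hj => hterm j hj) (by simp)]
      rw [Matrix.updateRow_self, Pi.single_apply, if_pos rfl]
      have hsubm : (B.updateRow l (Pi.single k 1)).submatrix l.succAbove k.succAbove
          = E.submatrix (f ∘ l.succAbove) (g ∘ k.succAbove) := by
        ext s t
        rw [Matrix.submatrix_apply, Matrix.updateRow_ne (Fin.succAbove_ne l s)]
        rfl
      rw [hsubm, hμ]
      have hC1 : MvPolynomial.C ((-1 : ℂ) ^ ((l : ℕ) + (k : ℕ)))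
          = ((-1 : MvPolynomial (Fin c) ℂ) ^ ((l : ℕ) + (k : ℕ))) := by
        rw [map_pow, _root_.map_neg, _root_.map_one]
      rw [MvPolynomial.C_mul, hC1]
      ring
    choose Cm hCm using hadj
    set G : Matrix (Fin (N + 1)) (Fin (N + 1)) (MvPolynomial (Fin c) ℂ) :=
      (Matrix.of Cm).map MvPolynomial.C with hG
    have hPBG : ∀ k l, P * ((B * G) k l) = B.det * (if k = l then 1 else 0) := by
      intro k l
      have h1 : P * ((B * G) k l) = (B * Matrix.adjugate B) k l := by
        rw [Matrix.mul_apply, Matrix.mul_apply, Finset.mul_sum]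
        exact Finset.sum_congr rfl fun m _ => by
          rw [hCm m l]
          simp [hG, Matrix.map_apply]
          ring
      rw [h1, Matrix.mul_adjugate]
      simp [Matrix.smul_apply, Matrix.one_apply, smul_eq_mul, mul_ite]
    set L : MvPolynomial (Fin c) ℂ := (B * G) 0 0 with hL
    have hDPL : B.det = P * L := by
      have := hPBG 0 0
      rw [if_pos rfl, mul_one] at this
      exact this.symm
    have hL0 : L ≠ 0 := by
      intro h
      rw [h, mul_zero] at hDPL
      exact hD hDPL
    have hscal : B * G = L • 1 := by
      apply Matrix.ext
      intro k l
      rcases eq_or_ne k l with rfl | hkl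
      · have := hPBG k k
        rw [if_pos rfl, mul_one, hDPL] at this
        have := mul_left_cancel₀ hPne this.symm
        rw [Matrix.smul_apply, Matrix.one_apply_eq, smul_eq_mul, mul_one]
        exact this.symm
      · have := hPBG k l
        rw [if_neg hkl, mul_zero] at this
        have h0 := (mul_eq_zero.mp this).resolve_left hPne
        rw [h0, Matrix.smul_apply, Matrix.one_apply_ne hkl, smul_eq_mul, mul_zero]
    have hdet2 : B.det * MvPolynomial.C (Matrix.det (Matrix.of Cm)) = L ^ (N + 1) := by
      have h1 : (B * G).det = L ^ (N + 1) := by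
        rw [hscal, Matrix.det_smul, Matrix.det_one]
        simp
      rw [← h1, Matrix.det_mul]
      congr 1
      rw [hG, ← RingHom.mapMatrix_apply, ← RingHom.map_det]
    have hPL : P * MvPolynomial.C (Matrix.det (Matrix.of Cm)) = L ^ N := by
      have h2 : L * (P * MvPolynomial.C (Matrix.det (Matrix.of Cm))) = L * L ^ N := by
        rw [← pow_succ' L N]
        rw [← hdet2, hDPL]
        ring
      exact mul_left_cancel₀ hL0 h2
    have hCm0 : Matrix.det (Matrix.of Cm) ≠ 0 := by
      intro h
      rw [h, map_zero, mul_zero] at hPL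
      exact hL0 (pow_eq_zero_iff (by omega : N ≠ 0) |>.mp hPL.symm)
    obtain ⟨zr, hzr⟩ := IsAlgClosed.exists_pow_nat_eq (Matrix.det (Matrix.of Cm))⁻¹
      (by omega : 0 < N)
    have hLhom : L.IsHomogeneous 1 := by
      rw [hL, Matrix.mul_apply]
      apply MvPolynomial.IsHomogeneous.sum Finset.univ _ 1
      intro m _
      have h1 : (B 0 m).IsHomogeneous 1 := hlin _ _
      have h2 : (G m 0).IsHomogeneous 0 := by
        rw [hG]
        exact MvPolynomial.isHomogeneous_C _ _
      simpa using h1.mul h2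
    refine ⟨fun _ => MvPolynomial.C zr * L, fun i => ?_, ?_⟩
    · simpa using (MvPolynomial.isHomogeneous_C (Fin c) zr).mul hLhom
    · rw [Finset.prod_const, Finset.card_univ, Fintype.card_fin]
      rw [mul_pow, ← map_pow, hzr]
      rw [← hPL]
      have hfin : MvPolynomial.C ((Matrix.det (Matrix.of Cm))⁻¹)
          * (P * MvPolynomial.C (Matrix.det (Matrix.of Cm))) = P := by
        rw [mul_comm P, ← mul_assoc, ← MvPolynomial.C_mul,
          inv_mul_cancel₀ hCm0, MvPolynomial.C_1, one_mul]
      rw [hfin]
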